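/- Explicit Berry-connection matrix in the 2D real avoided-crossing model: let δ > 0, u(x,y) := x, v(x,y) := √(y² + δ²), E(x,y) := √(x² + y² + δ²), and let Θ(x,y) be the matrix Θ(u,v) of the diagonalizing frame with these u, v. Then for all (x,y) ∈ ℝ² and (p,q) ∈ ℝ²: the matrix (p·∂ₓΘ + q·∂ᵧΘ)·Θᵀ has zero diagonal entries (b⁺ = b⁻ = 0) and its (1,2) entry equals bⁱ(x,y,p,q) = ( q·x·y/√(y²+δ²) − p·√(y²+δ²) ) / (2(x² + y² + δ²)), while its (2,1) entry equals −bⁱ. -/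

import Mathlib

open Matrix

/-- The diagonalizing frame for the 2D real avoided-crossing model `u(x,y) = x`,
`v(x,y) = √(y² + δ²)`, with `E(x,y) = √(x² + y² + δ²)`: since `v > 0` is real,
`Θ(x,y) = (2(1 + x/E))^{-1/2} · [[1 + x/E, v/E],[−v/E, 1 + x/E]]` (a real matrix). -/
noncomputable def Theta2Dreal (δ x y : ℝ) : Matrix (Fin 2) (Fin 2) ℝ :=
  let E : ℝ := Real.sqrt (x ^ 2 + y ^ 2 + δ ^ 2)
  let v : ℝ := Real.sqrt (y ^ 2 + δ ^ 2)
  (Real.sqrt (2 * (1 + x / E)))⁻¹ •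
    !![1 + x / E, v / E; -(v / E), 1 + x / E]

lemma theta_eq (δ : ℝ) (hδ : 0 < δ) (x y : ℝ) :
    Theta2Dreal δ x y =
    !![Real.sqrt ((Real.sqrt (x ^ 2 + y ^ 2 + δ ^ 2) + x) / (2 * Real.sqrt (x ^ 2 + y ^ 2 + δ ^ 2))),
       Real.sqrt ((Real.sqrt (x ^ 2 + y ^ 2 + δ ^ 2) - x) / (2 * Real.sqrt (x ^ 2 + y ^ 2 + δ ^ 2)));
       -Real.sqrt ((Real.sqrt (x ^ 2 + y ^ 2 + δ ^ 2) - x) / (2 * Real.sqrt (x ^ 2 + y ^ 2 + δ ^ 2))),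
       Real.sqrt ((Real.sqrt (x ^ 2 + y ^ 2 + δ ^ 2) + x) / (2 * Real.sqrt (x ^ 2 + y ^ 2 + δ ^ 2)))] := by
  set E : ℝ := Real.sqrt (x ^ 2 + y ^ 2 + δ ^ 2) with hE
  set v : ℝ := Real.sqrt (y ^ 2 + δ ^ 2) with hv
  have hEpos : 0 < E := Real.sqrt_pos.mpr (by positivity)
  have hE2 : E ^ 2 = x ^ 2 + y ^ 2 + δ ^ 2 := Real.sq_sqrt (by positivity)
  have hvpos : 0 < v := Real.sqrt_pos.mpr (by positivity)
  have hv2 : v ^ 2 = y ^ 2 + δ ^ 2 := Real.sq_sqrt (by positivity)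
  have hxlt : x < E := by nlinarith [hδ]
  have hxgt : -E < x := by nlinarith [hδ]
  have hEx : (0:ℝ) < E + x := by linarith
  have hEx' : (0:ℝ) < E - x := by linarith
  have hfeq : (1:ℝ) + x / E = (E + x) / E := by field_simp
  have hfpos : 0 < 1 + x / E := by rw [hfeq]; exact div_pos hEx hEpos
  set r : ℝ := Real.sqrt (2 * (1 + x / E)) with hr
  have hrpos : 0 < r := Real.sqrt_pos.mpr (by positivity)
  have hr2 : r ^ 2 = 2 * (1 + x / E) := Real.sq_sqrt (by positivity)
  have h1 : r⁻¹ * (1 + x / E) = Real.sqrt ((E + x) / (2 * E)) := by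
    rw [show (E + x) / (2 * E) = (r⁻¹ * (1 + x / E)) ^ 2 by
      rw [mul_pow, inv_pow, hr2, hfeq]; field_simp]
    rw [Real.sqrt_sq (by positivity)]
  have h2 : r⁻¹ * (v / E) = Real.sqrt ((E - x) / (2 * E)) := by
    rw [show (E - x) / (2 * E) = (r⁻¹ * (v / E)) ^ 2 by
      have hvE : v ^ 2 = E ^ 2 - x ^ 2 := by rw [hv2]; nlinarith [hE2]
      rw [mul_pow, inv_pow, hr2, hfeq, div_pow, hvE]
      field_simp
      ring]
    rw [Real.sqrt_sq (by positivity)]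
  show (Real.sqrt (2 * (1 + x / E)))⁻¹ • !![1 + x / E, v / E; -(v / E), 1 + x / E] = _
  rw [← hr]
  ext i j
  fin_cases i <;> fin_cases j <;>
    simp [smul_eq_mul, h1, h2, mul_neg]


set_option maxHeartbeats 1000000 in
/-- Explicit Berry-connection matrix in the 2D real avoided-crossing
model: for `δ > 0`, all `(x,y) ∈ ℝ²` and `(p,q) ∈ ℝ²`, the matrix
`(p·∂ₓΘ + q·∂ᵧΘ)·Θᵀ` has zero diagonal (`b⁺ = b⁻ = 0`), its `(1,2)` entry equals
`bⁱ = (q·x·y/√(y²+δ²) − p·√(y²+δ²)) / (2(x²+y²+δ²))`, and its `(2,1)` entry equals `−bⁱ`. -/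
theorem berry_connection_2d_real (δ : ℝ) (hδ : 0 < δ) (x y p q : ℝ) :
    (Matrix.of fun k l =>
        p * deriv (fun s => Theta2Dreal δ s y k l) x +
        q * deriv (fun s => Theta2Dreal δ x s k l) y) * (Theta2Dreal δ x y)ᵀ =
      !![0, (q * x * y / Real.sqrt (y ^ 2 + δ ^ 2) - p * Real.sqrt (y ^ 2 + δ ^ 2)) /
              (2 * (x ^ 2 + y ^ 2 + δ ^ 2));
         -((q * x * y / Real.sqrt (y ^ 2 + δ ^ 2) - p * Real.sqrt (y ^ 2 + δ ^ 2)) /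
              (2 * (x ^ 2 + y ^ 2 + δ ^ 2))), 0] := by
  set E : ℝ := Real.sqrt (x ^ 2 + y ^ 2 + δ ^ 2) with hE
  set v : ℝ := Real.sqrt (y ^ 2 + δ ^ 2) with hv
  have hEpos : 0 < E := Real.sqrt_pos.mpr (by positivity)
  have hE2 : E ^ 2 = x ^ 2 + y ^ 2 + δ ^ 2 := Real.sq_sqrt (by positivity)
  have hvpos : 0 < v := Real.sqrt_pos.mpr (by positivity)
  have hv2 : v ^ 2 = y ^ 2 + δ ^ 2 := Real.sq_sqrt (by positivity)
  have hxlt : x < E := by nlinarith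
  have hxgt : -E < x := by nlinarith
  have hEx : (0:ℝ) < E + x := by linarith
  have hEx' : (0:ℝ) < E - x := by linarith
  set C : ℝ := Real.sqrt ((E + x) / (2 * E)) with hC
  set S : ℝ := Real.sqrt ((E - x) / (2 * E)) with hS
  have hCpos : 0 < C := Real.sqrt_pos.mpr (by positivity)
  have hSpos : 0 < S := Real.sqrt_pos.mpr (by positivity)
  have hC2 : C ^ 2 = (E + x) / (2 * E) := Real.sq_sqrt (by positivity)
  have hS2 : S ^ 2 = (E - x) / (2 * E) := Real.sq_sqrt (by positivity)
  clear_value E v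
  have hCS : C * S = v / (2 * E) := by
    rw [hC, hS, ← Real.sqrt_mul (by positivity)]
    rw [show (E + x) / (2 * E) * ((E - x) / (2 * E)) = (v / (2 * E)) ^ 2 by
      rw [div_pow, hv2]
      have : v ^ 2 = E ^ 2 - x ^ 2 := by rw [hv2]; nlinarith
      field_simp
      nlinarith [this, hv2]]
    exact Real.sqrt_sq (by positivity)
  clear_value C S
  -- x-direction derivatives
  have hEne : (x:ℝ) ^ 2 + y ^ 2 + δ ^ 2 ≠ 0 := by positivity
  have hdEx : HasDerivAt (fun s : ℝ => Real.sqrt (s ^ 2 + y ^ 2 + δ ^ 2)) (x / E) x := by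
    have h1 : HasDerivAt (fun s : ℝ => s ^ 2 + y ^ 2 + δ ^ 2) (2 * x) x := by
      simpa using (((hasDerivAt_pow 2 x).add_const (y ^ 2)).add_const (δ ^ 2))
    have h2 := h1.sqrt hEne
    convert h2 using 1
    rw [← hE]
    field_simp
  have hdEy : HasDerivAt (fun t : ℝ => Real.sqrt (x ^ 2 + t ^ 2 + δ ^ 2)) (y / E) y := by
    have h1 : HasDerivAt (fun t : ℝ => x ^ 2 + t ^ 2 + δ ^ 2) (2 * y) y := by
      simpa using (((hasDerivAt_pow 2 y).const_add (x ^ 2)).add_const (δ ^ 2))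
    have h2 := h1.sqrt hEne
    convert h2 using 1
    rw [← hE]
    field_simp
  have h2Ene : (fun s : ℝ => 2 * Real.sqrt (s ^ 2 + y ^ 2 + δ ^ 2)) x ≠ 0 := by
    simp only [← hE]; positivity
  have h2Ene' : (fun t : ℝ => 2 * Real.sqrt (x ^ 2 + t ^ 2 + δ ^ 2)) y ≠ 0 := by
    simp only [← hE]; positivity
  have hdCx : HasDerivAt
      (fun s : ℝ => Real.sqrt ((Real.sqrt (s ^ 2 + y ^ 2 + δ ^ 2) + s) /
        (2 * Real.sqrt (s ^ 2 + y ^ 2 + δ ^ 2))))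
      ((y ^ 2 + δ ^ 2) / (4 * E ^ 3 * C)) x := by
    have hquot := (hdEx.add (hasDerivAt_id x)).div (hdEx.const_mul 2) h2Ene
    have hne : (fun s : ℝ => (Real.sqrt (s ^ 2 + y ^ 2 + δ ^ 2) + s) /
        (2 * Real.sqrt (s ^ 2 + y ^ 2 + δ ^ 2))) x ≠ 0 := by
      show ((Real.sqrt (x ^ 2 + y ^ 2 + δ ^ 2) + x) / (2 * Real.sqrt (x ^ 2 + y ^ 2 + δ ^ 2))) ≠ 0
      rw [← hE]; positivity
    have h2 := hquot.sqrt hne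
    simp only [id_eq, Pi.add_apply, Pi.div_apply, ← hE, ← hC] at h2
    convert h2 using 1
    field_simp
    linear_combination (-4) * hE2
  have hdSx : HasDerivAt
      (fun s : ℝ => Real.sqrt ((Real.sqrt (s ^ 2 + y ^ 2 + δ ^ 2) - s) /
        (2 * Real.sqrt (s ^ 2 + y ^ 2 + δ ^ 2))))
      (-((y ^ 2 + δ ^ 2) / (4 * E ^ 3 * S))) x := by
    have hquot := (hdEx.sub (hasDerivAt_id x)).div (hdEx.const_mul 2) h2Ene
    have hne : (fun s : ℝ => (Real.sqrt (s ^ 2 + y ^ 2 + δ ^ 2) - s) /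
        (2 * Real.sqrt (s ^ 2 + y ^ 2 + δ ^ 2))) x ≠ 0 := by
      show ((Real.sqrt (x ^ 2 + y ^ 2 + δ ^ 2) - x) / (2 * Real.sqrt (x ^ 2 + y ^ 2 + δ ^ 2))) ≠ 0
      rw [← hE]; positivity
    have h2 := hquot.sqrt hne
    simp only [id_eq, Pi.sub_apply, Pi.div_apply, ← hE, ← hS] at h2
    convert h2 using 1
    field_simp
    linear_combination 4 * hE2
  have hdCy : HasDerivAt
      (fun t : ℝ => Real.sqrt ((Real.sqrt (x ^ 2 + t ^ 2 + δ ^ 2) + x) /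
        (2 * Real.sqrt (x ^ 2 + t ^ 2 + δ ^ 2))))
      (-(x * y / (4 * E ^ 3 * C))) y := by
    have hquot := (hdEy.add_const x).div (hdEy.const_mul 2) h2Ene'
    have hne : (fun t : ℝ => (Real.sqrt (x ^ 2 + t ^ 2 + δ ^ 2) + x) /
        (2 * Real.sqrt (x ^ 2 + t ^ 2 + δ ^ 2))) y ≠ 0 := by
      show ((Real.sqrt (x ^ 2 + y ^ 2 + δ ^ 2) + x) / (2 * Real.sqrt (x ^ 2 + y ^ 2 + δ ^ 2))) ≠ 0
      rw [← hE]; positivity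
    have h2 := hquot.sqrt hne
    simp only [id_eq, Pi.div_apply, ← hE, ← hC] at h2
    convert h2 using 1
    field_simp
    ring
  have hdSy : HasDerivAt
      (fun t : ℝ => Real.sqrt ((Real.sqrt (x ^ 2 + t ^ 2 + δ ^ 2) - x) /
        (2 * Real.sqrt (x ^ 2 + t ^ 2 + δ ^ 2))))
      (x * y / (4 * E ^ 3 * S)) y := by
    have hquot := (hdEy.sub_const x).div (hdEy.const_mul 2) h2Ene'
    have hne : (fun t : ℝ => (Real.sqrt (x ^ 2 + t ^ 2 + δ ^ 2) - x) /
        (2 * Real.sqrt (x ^ 2 + t ^ 2 + δ ^ 2))) y ≠ 0 := by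
      show ((Real.sqrt (x ^ 2 + y ^ 2 + δ ^ 2) - x) / (2 * Real.sqrt (x ^ 2 + y ^ 2 + δ ^ 2))) ≠ 0
      rw [← hE]; positivity
    have h2 := hquot.sqrt hne
    simp only [id_eq, Pi.div_apply, ← hE, ← hS] at h2
    convert h2 using 1
    field_simp
    ring
  have f00x : (fun s => Theta2Dreal δ s y (0:Fin 2) (0:Fin 2)) =
      (fun s : ℝ => Real.sqrt ((Real.sqrt (s ^ 2 + y ^ 2 + δ ^ 2) + s) /
        (2 * Real.sqrt (s ^ 2 + y ^ 2 + δ ^ 2)))) := by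
    funext s; rw [theta_eq δ hδ s y]; simp
  have f01x : (fun s => Theta2Dreal δ s y (0:Fin 2) (1:Fin 2)) =
      (fun s : ℝ => Real.sqrt ((Real.sqrt (s ^ 2 + y ^ 2 + δ ^ 2) - s) /
        (2 * Real.sqrt (s ^ 2 + y ^ 2 + δ ^ 2)))) := by
    funext s; rw [theta_eq δ hδ s y]; simp
  have f10x : (fun s => Theta2Dreal δ s y (1:Fin 2) (0:Fin 2)) =
      (fun s : ℝ => -Real.sqrt ((Real.sqrt (s ^ 2 + y ^ 2 + δ ^ 2) - s) /
        (2 * Real.sqrt (s ^ 2 + y ^ 2 + δ ^ 2)))) := by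
    funext s; rw [theta_eq δ hδ s y]; simp
  have f11x : (fun s => Theta2Dreal δ s y (1:Fin 2) (1:Fin 2)) =
      (fun s : ℝ => Real.sqrt ((Real.sqrt (s ^ 2 + y ^ 2 + δ ^ 2) + s) /
        (2 * Real.sqrt (s ^ 2 + y ^ 2 + δ ^ 2)))) := by
    funext s; rw [theta_eq δ hδ s y]; simp
  have f00y : (fun t => Theta2Dreal δ x t (0:Fin 2) (0:Fin 2)) =
      (fun t : ℝ => Real.sqrt ((Real.sqrt (x ^ 2 + t ^ 2 + δ ^ 2) + x) /
        (2 * Real.sqrt (x ^ 2 + t ^ 2 + δ ^ 2)))) := by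
    funext t; rw [theta_eq δ hδ x t]; simp
  have f01y : (fun t => Theta2Dreal δ x t (0:Fin 2) (1:Fin 2)) =
      (fun t : ℝ => Real.sqrt ((Real.sqrt (x ^ 2 + t ^ 2 + δ ^ 2) - x) /
        (2 * Real.sqrt (x ^ 2 + t ^ 2 + δ ^ 2)))) := by
    funext t; rw [theta_eq δ hδ x t]; simp
  have f10y : (fun t => Theta2Dreal δ x t (1:Fin 2) (0:Fin 2)) =
      (fun t : ℝ => -Real.sqrt ((Real.sqrt (x ^ 2 + t ^ 2 + δ ^ 2) - x) /
        (2 * Real.sqrt (x ^ 2 + t ^ 2 + δ ^ 2)))) := by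
    funext t; rw [theta_eq δ hδ x t]; simp
  have f11y : (fun t => Theta2Dreal δ x t (1:Fin 2) (1:Fin 2)) =
      (fun t : ℝ => Real.sqrt ((Real.sqrt (x ^ 2 + t ^ 2 + δ ^ 2) + x) /
        (2 * Real.sqrt (x ^ 2 + t ^ 2 + δ ^ 2)))) := by
    funext t; rw [theta_eq δ hδ x t]; simp
  have d00x : deriv (fun s => Theta2Dreal δ s y (0:Fin 2) (0:Fin 2)) x
      = (y ^ 2 + δ ^ 2) / (4 * E ^ 3 * C) := by rw [f00x]; exact hdCx.deriv
  have d01x : deriv (fun s => Theta2Dreal δ s y (0:Fin 2) (1:Fin 2)) x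
      = -((y ^ 2 + δ ^ 2) / (4 * E ^ 3 * S)) := by rw [f01x]; exact hdSx.deriv
  have d10x : deriv (fun s => Theta2Dreal δ s y (1:Fin 2) (0:Fin 2)) x
      = (y ^ 2 + δ ^ 2) / (4 * E ^ 3 * S) := by
    rw [f10x]; simpa using hdSx.neg.deriv
  have d11x : deriv (fun s => Theta2Dreal δ s y (1:Fin 2) (1:Fin 2)) x
      = (y ^ 2 + δ ^ 2) / (4 * E ^ 3 * C) := by rw [f11x]; exact hdCx.deriv
  have d00y : deriv (fun t => Theta2Dreal δ x t (0:Fin 2) (0:Fin 2)) y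
      = -(x * y / (4 * E ^ 3 * C)) := by rw [f00y]; exact hdCy.deriv
  have d01y : deriv (fun t => Theta2Dreal δ x t (0:Fin 2) (1:Fin 2)) y
      = x * y / (4 * E ^ 3 * S) := by rw [f01y]; exact hdSy.deriv
  have d10y : deriv (fun t => Theta2Dreal δ x t (1:Fin 2) (0:Fin 2)) y
      = -(x * y / (4 * E ^ 3 * S)) := by
    rw [f10y]; simpa using hdSy.neg.deriv
  have d11y : deriv (fun t => Theta2Dreal δ x t (1:Fin 2) (1:Fin 2)) y
      = -(x * y / (4 * E ^ 3 * C)) := by rw [f11y]; exact hdCy.deriv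
  have hTθ : Theta2Dreal δ x y = !![C, S; -S, C] := by
    rw [theta_eq δ hδ x y, ← hE, ← hC, ← hS]
  have hC2' : 2 * E * C ^ 2 = E + x := by rw [hC2]; field_simp
  have hS2' : 2 * E * S ^ 2 = E - x := by rw [hS2]; field_simp
  have hCS2 : 2 * E * (C * S) = v := by rw [hCS]; field_simp
  rw [hTθ]
  ext i j
  fin_cases i <;> fin_cases j <;>
    simp only [Fin.mk_zero, Fin.mk_one, Matrix.mul_apply, Fin.sum_univ_two, Matrix.of_apply,
      Matrix.transpose_apply, Fin.isValue, Matrix.cons_val', Matrix.cons_val_zero,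
      Matrix.cons_val_one, Matrix.head_cons, Matrix.head_fin_const, Matrix.empty_val',
      Matrix.cons_val_fin_one, d00x, d01x, d10x, d11x, d00y, d01y, d10y, d11y]
  · field_simp
    ring
  · rw [← hE2, ← hv2]
    field_simp
    have hsum : C ^ 2 + S ^ 2 = 1 := by rw [hC2, hS2]; field_simp; ring
    linear_combination (-(2 * v * (p * v ^ 2 - q * x * y))) * hsum +
      (-(2 * (q * x * y - p * v ^ 2))) * hCS2
  · rw [← hE2, ← hv2]
    field_simp
    have hsum : C ^ 2 + S ^ 2 = 1 := by rw [hC2, hS2]; field_simp; ring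
    linear_combination (2 * v * (p * v ^ 2 - q * x * y)) * hsum +
      (2 * (q * x * y - p * v ^ 2)) * hCS2
  · field_simp
    ring
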